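/- arXiv:1404.2653 — 3 statements merged into one kernel-verified Lean document; each statement's English description precedes it below -/
import Mathlib

section
/- For every real θ, |cos(θ - π/2)| + |cos(θ - π/6)| + |cos(θ + π/6)| ≤ 2. -/
set_option maxHeartbeats 1000000


theorem stmt_2 (θ : ℝ) :
    |Real.cos (θ - Real.pi / 2)| + |Real.cos (θ - Real.pi / 6)| +
      |Real.cos (θ + Real.pi / 6)| ≤ 2 := by
  have hs : Real.cos (θ - Real.pi / 2) = Real.sin θ := by
    rw [Real.cos_sub, Real.cos_pi_div_two, Real.sin_pi_div_two]; ring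
  rw [hs, Real.cos_sub, Real.cos_add, Real.cos_pi_div_six, Real.sin_pi_div_six]
  set s := Real.sin θ
  set c := Real.cos θ
  have h1 : s ^ 2 + c ^ 2 = 1 := Real.sin_sq_add_cos_sq θ
  have h3 : Real.sqrt 3 ^ 2 = 3 := Real.sq_sqrt (by norm_num)
  have h3n : (0:ℝ) ≤ Real.sqrt 3 := Real.sqrt_nonneg 3
  rcases abs_cases s with ⟨e1, _⟩ | ⟨e1, _⟩ <;>
    rcases abs_cases (c * (Real.sqrt 3 / 2) + s * (1 / 2)) with ⟨e2, _⟩ | ⟨e2, _⟩ <;>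
    rcases abs_cases (c * (Real.sqrt 3 / 2) - s * (1 / 2)) with ⟨e3, _⟩ | ⟨e3, _⟩ <;>
    rw [e1, e2, e3] <;>
    nlinarith [sq_nonneg (Real.sqrt 3 * s - c), sq_nonneg (Real.sqrt 3 * s + c),
      sq_nonneg (s - 1), sq_nonneg (s + 1), sq_nonneg (Real.sqrt 3 * c - s),
      sq_nonneg (Real.sqrt 3 * c + s), h1, h3, h3n]
end

section
/- Define g(δ) = (sqrt(1 + (1+δ)^2) + sqrt(1 + (1-δ)^2))/(2*sqrt 2) - 1. Then g(δ)/δ^2 tends to 1/8 as δ tends to 0 from the right. -/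
noncomputable def hFun (δ : ℝ) : ℝ :=
  (2 + 2*δ^2/(Real.sqrt (4+δ^4)+2)) /
    (2*Real.sqrt 2 * (Real.sqrt (2+2*δ+δ^2) + Real.sqrt (2-2*δ+δ^2) + 2*Real.sqrt 2))

lemma key (δ : ℝ) (hδ : 0 < δ) :
    ((Real.sqrt (1 + (1 + δ) ^ 2) + Real.sqrt (1 + (1 - δ) ^ 2)) / (2 * Real.sqrt 2) - 1) / δ ^ 2
      = hFun δ := by
  have h1 : (1:ℝ) + (1+δ)^2 = 2+2*δ+δ^2 := by ring
  have h2 : (1:ℝ) + (1-δ)^2 = 2-2*δ+δ^2 := by ring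
  rw [h1, h2, hFun]
  have hp1 : (0:ℝ) < 2+2*δ+δ^2 := by nlinarith
  have hp2 : (0:ℝ) < 2-2*δ+δ^2 := by nlinarith [sq_nonneg (1-δ)]
  have hp3 : (0:ℝ) < 4+δ^4 := by positivity
  set a := Real.sqrt (2+2*δ+δ^2) with ha
  set b := Real.sqrt (2-2*δ+δ^2) with hb
  set c := Real.sqrt (4+δ^4) with hc
  set s := Real.sqrt 2 with hs
  have ha2 : a^2 = 2+2*δ+δ^2 := Real.sq_sqrt hp1.le
  have hb2 : b^2 = 2-2*δ+δ^2 := Real.sq_sqrt hp2.le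
  have hc2 : c^2 = 4+δ^4 := Real.sq_sqrt hp3.le
  have hs2 : s^2 = 2 := Real.sq_sqrt (by norm_num)
  have hab : a*b = c := by
    rw [ha, hb, hc, ← Real.sqrt_mul hp1.le]
    congr 1; ring
  have hapos : 0 < a := Real.sqrt_pos.mpr hp1
  have hbpos : 0 < b := Real.sqrt_pos.mpr hp2
  have hcpos : 0 < c := Real.sqrt_pos.mpr hp3
  have hspos : 0 < s := Real.sqrt_pos.mpr (by norm_num)
  have hd1 : c + 2 ≠ 0 := by positivity
  have hd2 : a + b + 2*s ≠ 0 := by positivity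
  have hδ' : δ ≠ 0 := hδ.ne'
  field_simp
  ring_nf
  linear_combination (4+2*c)*hab + (2+c)*ha2 + (2+c)*hb2 + 2*hc2 - (8+4*c)*hs2

theorem stmt_4 (g : ℝ → ℝ)
    (hg : ∀ δ : ℝ, g δ =
      (Real.sqrt (1 + (1 + δ) ^ 2) + Real.sqrt (1 + (1 - δ) ^ 2)) / (2 * Real.sqrt 2) - 1) :
    Filter.Tendsto (fun δ => g δ / δ ^ 2) (nhdsWithin 0 (Set.Ioi 0)) (nhds (1 / 8)) := by
  have heq : ∀ᶠ δ in nhdsWithin 0 (Set.Ioi 0), hFun δ = g δ / δ ^ 2 := by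
    filter_upwards [self_mem_nhdsWithin] with δ hδ
    rw [hg δ]; exact (key δ hδ).symm
  have hcont : ContinuousAt hFun 0 := by
    have c1 : ContinuousAt (fun δ:ℝ => Real.sqrt (4+δ^4)+2) 0 := by fun_prop
    have n1 : Real.sqrt (4+(0:ℝ)^4)+2 ≠ 0 := by positivity
    have c2 : ContinuousAt (fun δ:ℝ => 2*Real.sqrt 2 *
        (Real.sqrt (2+2*δ+δ^2) + Real.sqrt (2-2*δ+δ^2) + 2*Real.sqrt 2)) 0 := by fun_prop
    have n2 : 2*Real.sqrt 2 *
        (Real.sqrt (2+2*(0:ℝ)+(0:ℝ)^2) + Real.sqrt (2-2*(0:ℝ)+(0:ℝ)^2) + 2*Real.sqrt 2) ≠ 0 := by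
      positivity
    exact (continuousAt_const.add ((by fun_prop : ContinuousAt (fun δ:ℝ => 2*δ^2) 0).div c1 n1)).div
      c2 n2
  have hval : hFun 0 = 1/8 := by
    have h4 : Real.sqrt 4 = 2 := by
      rw [show (4:ℝ) = 2^2 by norm_num, Real.sqrt_sq (by norm_num : (0:ℝ) ≤ 2)]
    have hs2 : Real.sqrt 2 * Real.sqrt 2 = 2 := Real.mul_self_sqrt (by norm_num)
    simp only [hFun]
    norm_num [h4]
    rw [div_eq_iff (by positivity)]
    nlinarith [hs2]
  refine Filter.Tendsto.congr' heq ?_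
  rw [← hval]
  exact hcont.tendsto.mono_left nhdsWithin_le_nhds
end

section
/- For any integer k ≥ 2 and ω ∈ [0, π/k], one has π/k - cos ω · sin ω + sin²ω / tan(π/k) > 0. -/
theorem stmt_14 (k : ℕ) (hk : 2 ≤ k) (ω : ℝ) (hω : 0 ≤ ω) (hω' : ω ≤ Real.pi / k) :
    0 < Real.pi / k - Real.cos ω * Real.sin ω +
      Real.sin ω ^ 2 / Real.tan (Real.pi / k) := by
  have hk0 : (0:ℝ) < k := by positivity
  have ha : 0 < Real.pi / k := by positivity
  have ha2 : Real.pi / k ≤ Real.pi / 2 := by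
    apply div_le_div_of_nonneg_left Real.pi_pos.le (by norm_num)
    exact_mod_cast hk
  have htan : 0 ≤ Real.tan (Real.pi / k) := Real.tan_nonneg_of_nonneg_of_le_pi_div_two ha.le ha2
  have hdiv : 0 ≤ Real.sin ω ^ 2 / Real.tan (Real.pi / k) := by positivity
  rcases eq_or_lt_of_le hω with h0 | h0
  · simp [← h0]
    positivity
  · have hsin : Real.sin ω < ω := Real.sin_lt h0
    have hsin0 : 0 ≤ Real.sin ω :=
      Real.sin_nonneg_of_nonneg_of_le_pi hω
        (hω'.trans (ha2.trans (by linarith [Real.pi_pos])))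
    have hcos : Real.cos ω * Real.sin ω ≤ Real.sin ω := by
      nlinarith [Real.cos_le_one ω]
    linarith
end
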